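/- arXiv:0804.3511 — 2 statements merged into one kernel-verified Lean document; each statement's English description precedes it below -/
import Mathlib

section
/- Let 0 < α < 1 < n and k_{1,α}(x) = γ_n(α)^{−1}(|x|^{α−n} − |x−e₁|^{α−n}). Then k_{1,α} is integrable on ℝⁿ and ∫_{ℝⁿ} k_{1,α}(y) dy = 0. -/
open MeasureTheory Metric Set Filter
open scoped ENNReal NNReal

noncomputable section

/-- MVT bound for rpow with negative exponent. -/
lemma rpow_sub_rpow_abs_le {p m a b : ℝ} (hp : p < 0) (hm : 0 < m)
    (ha : m ≤ a) (hb : m ≤ b) :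
    |a ^ p - b ^ p| ≤ (-p) * m ^ (p - 1) * |a - b| := by
  have key : ‖(fun t : ℝ ↦ t ^ p) a - (fun t : ℝ ↦ t ^ p) b‖ ≤
      ((-p) * m ^ (p - 1)) * ‖a - b‖ := by
    refine (convex_Ici m).norm_image_sub_le_of_norm_hasDerivWithin_le
      (f := fun t : ℝ ↦ t ^ p) (f' := fun t ↦ p * t ^ (p - 1)) (fun x hx ↦ ?_) (fun x hx ↦ ?_) hb ha
    · exact (Real.hasDerivAt_rpow_const (Or.inl (hm.trans_le hx).ne')).hasDerivWithinAt
    · rw [norm_mul, Real.norm_eq_abs, Real.norm_eq_abs, abs_of_neg hp,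
        abs_of_nonneg (Real.rpow_nonneg (hm.trans_le hx).le _)]
      exact mul_le_mul_of_nonneg_left
        (Real.rpow_le_rpow_of_nonpos hm hx (by linarith)) (by linarith)
  simpa [Real.norm_eq_abs] using key

lemma integrableOn_rpow_ball (n : ℕ) [NeZero n] {r : ℝ} (h0 : 0 < r) (hrn : r < n)
    (c : EuclideanSpace ℝ (Fin n)) {R : ℝ} (hR : 0 < R) :
    IntegrableOn (fun x : EuclideanSpace ℝ (Fin n) ↦ ‖x - c‖ ^ (-r)) (ball c R) := by
  have hmeas : Measurable fun x : EuclideanSpace ℝ (Fin n) ↦ ‖x - c‖ ^ (-r) := by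
    fun_prop
  have hnn : ∀ x : EuclideanSpace ℝ (Fin n), 0 ≤ ‖x - c‖ ^ (-r) :=
    fun x ↦ Real.rpow_nonneg (norm_nonneg _) _
  constructor
  · exact hmeas.aestronglyMeasurable
  · rw [HasFiniteIntegral, lintegral_enorm_of_nonneg hnn,
      lintegral_eq_lintegral_meas_le _ (ae_of_all _ hnn) hmeas.aemeasurable]
    set μr := volume.restrict (ball c R) with hμr
    have hAmeas : ∀ t : ℝ, MeasurableSet {x : EuclideanSpace ℝ (Fin n) | t ≤ ‖x - c‖ ^ (-r)} :=
      fun t ↦ measurableSet_le measurable_const hmeas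
    have hle1 : ∀ t ∈ Ioc (0:ℝ) 1, μr {x | t ≤ ‖x - c‖ ^ (-r)} ≤ volume (ball c R) := by
      intro t _
      rw [hμr, Measure.restrict_apply (hAmeas t)]
      exact measure_mono inter_subset_right
    have hsub : ∀ t : ℝ, 0 < t →
        {x : EuclideanSpace ℝ (Fin n) | t ≤ ‖x - c‖ ^ (-r)} ⊆ closedBall c (t ^ (-r)⁻¹) := by
      intro t ht x hx
      simp only [mem_setOf_eq] at hx
      have hxc : 0 < ‖x - c‖ := by
        rcases eq_or_lt_of_le (norm_nonneg (x - c)) with h | h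
        · exfalso
          rw [← h, Real.zero_rpow (by linarith : -r ≠ 0)] at hx
          linarith
        · exact h
      rw [mem_closedBall, dist_eq_norm]
      exact (Real.le_rpow_inv_iff_of_neg hxc ht (by linarith)).2 hx
    have hle2 : ∀ t ∈ Ioi (1:ℝ),
        μr {x | t ≤ ‖x - c‖ ^ (-r)} ≤
          ENNReal.ofReal (t ^ ((-r)⁻¹ * n)) *
            volume (ball (0 : EuclideanSpace ℝ (Fin n)) 1) := by
      intro t ht
      have ht0 : (0:ℝ) < t := lt_trans one_pos ht
      have h1 : μr {x | t ≤ ‖x - c‖ ^ (-r)} ≤ volume (closedBall c (t ^ (-r)⁻¹)) := by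
        rw [hμr, Measure.restrict_apply (hAmeas t)]
        exact measure_mono (inter_subset_left.trans (hsub t ht0))
      have h2 : volume (closedBall c (t ^ (-r)⁻¹)) =
          ENNReal.ofReal (t ^ ((-r)⁻¹ * n)) *
            volume (ball (0 : EuclideanSpace ℝ (Fin n)) 1) := by
        rw [Measure.addHaar_closedBall _ _ (Real.rpow_nonneg ht0.le _)]
        congr 2
        rw [finrank_euclideanSpace_fin, Real.rpow_mul ht0.le, Real.rpow_natCast]
      exact h1.trans_eq h2
    calc ∫⁻ t in Ioi (0:ℝ), μr {x | t ≤ ‖x - c‖ ^ (-r)}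
        ≤ ∫⁻ t in Ioc (0:ℝ) 1 ∪ Ioi 1, μr {x | t ≤ ‖x - c‖ ^ (-r)} :=
          lintegral_mono_set Ioi_subset_Ioc_union_Ioi
      _ ≤ (∫⁻ t in Ioc (0:ℝ) 1, μr {x | t ≤ ‖x - c‖ ^ (-r)}) +
          ∫⁻ t in Ioi (1:ℝ), μr {x | t ≤ ‖x - c‖ ^ (-r)} := lintegral_union_le _ _ _
      _ < ∞ := by
          refine ENNReal.add_lt_top.2 ⟨?_, ?_⟩
          · calc (∫⁻ t in Ioc (0:ℝ) 1, μr {x | t ≤ ‖x - c‖ ^ (-r)})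
                ≤ ∫⁻ _ in Ioc (0:ℝ) 1, volume (ball c R) :=
                  setLIntegral_mono' measurableSet_Ioc hle1
              _ = volume (ball c R) * volume (Ioc (0:ℝ) 1) := by
                  rw [setLIntegral_const]
              _ < ∞ := ENNReal.mul_lt_top measure_ball_lt_top (by simp)
          · have hq : (-r)⁻¹ * n < -1 := by
              have h1 : (1:ℝ) < r⁻¹ * n := by
                rw [inv_mul_eq_div]; exact (one_lt_div h0).2 hrn
              rw [← neg_inv, neg_mul]; linarith
            calc (∫⁻ t in Ioi (1:ℝ), μr {x | t ≤ ‖x - c‖ ^ (-r)})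
                ≤ ∫⁻ t in Ioi (1:ℝ), ENNReal.ofReal (t ^ ((-r)⁻¹ * n)) *
                    volume (ball (0 : EuclideanSpace ℝ (Fin n)) 1) :=
                  setLIntegral_mono' measurableSet_Ioi hle2
              _ = (∫⁻ t in Ioi (1:ℝ), ENNReal.ofReal (t ^ ((-r)⁻¹ * n))) *
                    volume (ball (0 : EuclideanSpace ℝ (Fin n)) 1) :=
                  lintegral_mul_const' _ _ measure_ball_lt_top.ne
              _ < ∞ := ENNReal.mul_lt_top
                  ((integrableOn_Ioi_rpow_of_lt hq one_pos).setLIntegral_lt_top)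
                  measure_ball_lt_top

/-- The normalizing constant `γ_n(α)` of the Riesz potential. -/
def rieszGamma (n : ℕ) (α : ℝ) : ℝ :=
  2 ^ α * Real.pi ^ ((n : ℝ) / 2) * Real.Gamma (α / 2) / Real.Gamma (((n : ℝ) - α) / 2)

/-- The first standard basis vector `e₁` of `ℝⁿ`. -/
def e1 (n : ℕ) [NeZero n] : EuclideanSpace ℝ (Fin n) := EuclideanSpace.single 0 1

/-- First-order non-centered difference of the Riesz kernel. -/
def k1 (n : ℕ) [NeZero n] (α : ℝ) (x : EuclideanSpace ℝ (Fin n)) : ℝ :=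
  (rieszGamma n α)⁻¹ * (‖x‖ ^ (α - n) - ‖x - e1 n‖ ^ (α - n))


theorem stmt6 (n : ℕ) [NeZero n] (hn : 1 < n) (α : ℝ) (hα0 : 0 < α) (hα1 : α < 1) :
    Integrable (k1 n α) ∧ ∫ y, k1 n α y = 0 := by
  have hn1 : (1:ℝ) < n := by exact_mod_cast hn
  have he1 : ‖e1 n‖ = 1 := by
    rw [e1, EuclideanSpace.norm_single]; norm_num
  have hp0 : α - (n:ℝ) < 0 := by linarith
  have h1 : IntegrableOn (fun x : EuclideanSpace ℝ (Fin n) ↦ ‖x‖ ^ (α - n))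
      (ball (0 : EuclideanSpace ℝ (Fin n)) 2) := by
    have := integrableOn_rpow_ball n (r := (n:ℝ) - α) (by linarith) (by linarith)
      (0 : EuclideanSpace ℝ (Fin n)) (R := 2) two_pos
    simpa [sub_zero, neg_sub] using this
  have h2 : IntegrableOn (fun x : EuclideanSpace ℝ (Fin n) ↦ ‖x - e1 n‖ ^ (α - n))
      (ball (0 : EuclideanSpace ℝ (Fin n)) 2) := by
    have h3 := integrableOn_rpow_ball n (r := (n:ℝ) - α) (by linarith) (by linarith)
      (e1 n) (R := 3) (by norm_num)
    have h4 : IntegrableOn (fun x : EuclideanSpace ℝ (Fin n) ↦ ‖x - e1 n‖ ^ (α - n))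
        (ball (e1 n) 3) := by simpa [neg_sub] using h3
    have hsub : ball (0 : EuclideanSpace ℝ (Fin n)) 2 ⊆ ball (e1 n) 3 := by
      intro x hx
      rw [mem_ball, dist_eq_norm]
      rw [mem_ball, dist_zero_right] at hx
      calc ‖x - e1 n‖ ≤ ‖x‖ + ‖e1 n‖ := norm_sub_le _ _
        _ < 3 := by rw [he1]; linarith
    exact h4.mono_set hsub
  have hnear : IntegrableOn (fun x : EuclideanSpace ℝ (Fin n) ↦
      ‖x‖ ^ (α - n) - ‖x - e1 n‖ ^ (α - n))
      (ball (0 : EuclideanSpace ℝ (Fin n)) 2) := h1.sub h2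
  have hmeasF : Measurable (fun x : EuclideanSpace ℝ (Fin n) ↦
      ‖x‖ ^ (α - n) - ‖x - e1 n‖ ^ (α - n)) := by fun_prop
  set r1 : ℝ := (n:ℝ) + 1 - α with hr1
  have hint : Integrable (fun x : EuclideanSpace ℝ (Fin n) ↦ (1 + ‖x‖) ^ (-r1)) := by
    apply integrable_one_add_norm
    rw [finrank_euclideanSpace_fin]; linarith
  have hbound : ∀ x ∈ (ball (0 : EuclideanSpace ℝ (Fin n)) 2)ᶜ,
      ‖‖x‖ ^ (α - n) - ‖x - e1 n‖ ^ (α - n)‖ ≤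
        (((n:ℝ) - α) * 3 ^ r1) * (1 + ‖x‖) ^ (-r1) := by
    intro x hx
    have hx2 : (2:ℝ) ≤ ‖x‖ := by
      rw [Set.mem_compl_iff, mem_ball, dist_zero_right, not_lt] at hx
      exact hx
    set m : ℝ := ‖x‖ - 1 with hm
    have hm0 : 0 < m := by simp only [hm]; linarith
    have hma : m ≤ ‖x‖ := by simp only [hm]; linarith
    have hmb : m ≤ ‖x - e1 n‖ := by
      have := norm_sub_norm_le x (e1 n)
      simp only [hm]; rw [← he1]; linarith
    have key := rpow_sub_rpow_abs_le hp0 hm0 hma hmb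
    have habs : |‖x‖ - ‖x - e1 n‖| ≤ 1 := by
      have := abs_norm_sub_norm_le x (x - e1 n)
      rw [sub_sub_cancel, he1] at this
      exact this
    have hmle : m ^ (α - (n:ℝ) - 1) ≤ 3 ^ r1 * (1 + ‖x‖) ^ (-r1) := by
      have hq : ((1 + ‖x‖) / 3) ^ (α - (n:ℝ) - 1) =
          3 ^ r1 * (1 + ‖x‖) ^ (-r1) := by
        rw [Real.div_rpow (by linarith) (by norm_num)]
        rw [div_eq_mul_inv, ← Real.rpow_neg (by norm_num)]
        have hq1 : -(α - (n:ℝ) - 1) = r1 := by rw [hr1]; ring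
        have hq2 : α - (n:ℝ) - 1 = -r1 := by rw [hr1]; ring
        rw [hq1, hq2, mul_comm]
      rw [← hq]
      apply Real.rpow_le_rpow_of_nonpos (by positivity) _ (by linarith)
      rw [div_le_iff₀ (by norm_num : (0:ℝ) < 3)]
      simp only [hm]; linarith
    calc ‖‖x‖ ^ (α - n) - ‖x - e1 n‖ ^ (α - n)‖
        ≤ (-(α - (n:ℝ))) * m ^ (α - (n:ℝ) - 1) * |‖x‖ - ‖x - e1 n‖| := key
      _ ≤ (-(α - (n:ℝ))) * m ^ (α - (n:ℝ) - 1) * 1 := by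
          apply mul_le_mul_of_nonneg_left habs
          apply mul_nonneg (by linarith) (Real.rpow_nonneg hm0.le _)
      _ = ((n:ℝ) - α) * m ^ (α - (n:ℝ) - 1) := by ring
      _ ≤ ((n:ℝ) - α) * (3 ^ r1 * (1 + ‖x‖) ^ (-r1)) :=
          mul_le_mul_of_nonneg_left hmle (by linarith)
      _ = (((n:ℝ) - α) * 3 ^ r1) * (1 + ‖x‖) ^ (-r1) := by ring
  have hfar : IntegrableOn (fun x : EuclideanSpace ℝ (Fin n) ↦
      ‖x‖ ^ (α - n) - ‖x - e1 n‖ ^ (α - n))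
      (ball (0 : EuclideanSpace ℝ (Fin n)) 2)ᶜ := by
    apply Integrable.mono' ((hint.const_mul (((n:ℝ) - α) * 3 ^ r1)).integrableOn)
      hmeasF.aestronglyMeasurable.restrict
    exact (ae_restrict_iff' measurableSet_ball.compl).2 (ae_of_all _ hbound)
  have hF : Integrable (fun x : EuclideanSpace ℝ (Fin n) ↦
      ‖x‖ ^ (α - n) - ‖x - e1 n‖ ^ (α - n)) := by
    rw [← integrableOn_univ,
      ← Set.union_compl_self (ball (0 : EuclideanSpace ℝ (Fin n)) 2)]
    exact hnear.union hfar
  have hriesz : Integrable (k1 n α) := by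
    have hk : k1 n α = fun x ↦ (rieszGamma n α)⁻¹ *
        (‖x‖ ^ (α - n) - ‖x - e1 n‖ ^ (α - n)) := rfl
    rw [hk]
    exact hF.const_mul _
  refine ⟨hriesz, ?_⟩
  have hsymm : ∀ y, k1 n α (e1 n - y) = - k1 n α y := by
    intro y
    simp only [k1]
    rw [norm_sub_rev (e1 n) y, sub_sub_cancel_left, norm_neg]
    ring
  have hzero : ∫ y, k1 n α y = - ∫ y, k1 n α y := by
    conv_lhs => rw [← integral_sub_left_eq_self (k1 n α) volume (e1 n)]
    simp only [hsymm]
    exact integral_neg _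
  linarith
end
end

section
/- Let 0 < α < 1 < n and define K_{1,α}(x) = d_{n,1}(α)^{−1} |x|^{−n} ∫_{|y|<|x|} k_{1,α}(y) dy, where k_{1,α}(y) = γ_n(α)^{−1}(|y|^{α−n} − |y−e₁|^{α−n}). Then there is a constant C > 0 such that |K_{1,α}(x)| ≤ C|x|^{α−n} for all 0 < |x| ≤ 1. -/
open MeasureTheory Metric Set ENNReal

noncomputable section

/-- Key estimate: the L¹-type bound for the Riesz kernel on a ball, via the layer cake formula. -/
lemma keyL (n : ℕ) [NeZero n] (α : ℝ) (hα0 : 0 < α) (hαn : α < n) (R : ℝ) (hR : 0 < R) :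
    ∫⁻ y in ball (0 : EuclideanSpace ℝ (Fin n)) R, ENNReal.ofReal (‖y‖ ^ (α - (n : ℝ))) ≤
      volume (ball (0 : EuclideanSpace ℝ (Fin n)) 1) *
        ENNReal.ofReal ((1 + ((n : ℝ) - α) / α) * R ^ α) := by
  set E := EuclideanSpace ℝ (Fin n)
  set cn := volume (ball (0 : E) 1) with hcn
  have hfr : Module.finrank ℝ E = n := finrank_euclideanSpace_fin
  have hne : α - (n : ℝ) ≠ 0 := sub_ne_zero.mpr hαn.ne
  have hneg : α - (n : ℝ) < 0 := by
    have : (α : ℝ) < n := hαn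
    linarith
  have hmeas : Measurable fun y : E => ‖y‖ ^ (α - (n : ℝ)) :=
    measurable_norm.pow_const _
  rw [lintegral_eq_lintegral_meas_le _
    (Filter.Eventually.of_forall fun y => Real.rpow_nonneg (norm_nonneg y) _) hmeas.aemeasurable]
  set T := R ^ (α - (n : ℝ)) with hT
  have hT0 : 0 < T := Real.rpow_pos_of_pos hR _
  set s : ℝ := (α - (n : ℝ))⁻¹ * n with hs
  have hs_lt : s < -1 := by
    rw [hs, inv_mul_eq_div, div_lt_iff_of_neg hneg]
    nlinarith
  have key2 : ∀ t ∈ Ioi T,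
      (volume.restrict (ball (0 : E) R)) {y : E | t ≤ ‖y‖ ^ (α - (n : ℝ))} ≤
        ENNReal.ofReal (t ^ s) * cn := by
    intro t ht
    have ht0 : 0 < t := hT0.trans ht
    set ρ := t ^ ((α - (n : ℝ))⁻¹) with hρdef
    have hρ : 0 ≤ ρ := (Real.rpow_pos_of_pos ht0 _).le
    have hsub : {y : E | t ≤ ‖y‖ ^ (α - (n : ℝ))} ⊆ closedBall 0 ρ := by
      intro y hy
      simp only [mem_setOf_eq] at hy
      have hy0 : y ≠ 0 := by
        rintro rfl
        rw [norm_zero, Real.zero_rpow hne] at hy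
        linarith
      have hy0' : (0:ℝ) < ‖y‖ := norm_pos_iff.mpr hy0
      have h2 : (‖y‖ ^ (α - (n : ℝ))) ^ ((α - (n : ℝ))⁻¹) ≤ ρ :=
        Real.rpow_le_rpow_of_nonpos ht0 hy (by
          simpa using (inv_nonpos.mpr hneg.le))
      rw [← Real.rpow_mul hy0'.le, mul_inv_cancel₀ hne, Real.rpow_one] at h2
      exact mem_closedBall_zero_iff.mpr h2
    calc (volume.restrict (ball (0 : E) R)) {y : E | t ≤ ‖y‖ ^ (α - (n : ℝ))}
        ≤ volume {y : E | t ≤ ‖y‖ ^ (α - (n : ℝ))} := Measure.restrict_le_self _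
      _ ≤ volume (closedBall (0 : E) ρ) := measure_mono hsub
      _ = ENNReal.ofReal (ρ ^ Module.finrank ℝ E) * cn := Measure.addHaar_closedBall _ _ hρ
      _ = ENNReal.ofReal (t ^ s) * cn := by
          rw [hfr, ← Real.rpow_natCast ρ n, hρdef, ← Real.rpow_mul ht0.le]
  calc ∫⁻ t in Ioi (0:ℝ), (volume.restrict (ball (0 : E) R)) {y : E | t ≤ ‖y‖ ^ (α - (n : ℝ))}
      = (∫⁻ t in Ioc (0:ℝ) T, (volume.restrict (ball (0 : E) R)) {y : E | t ≤ ‖y‖ ^ (α - (n : ℝ))})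
        + ∫⁻ t in Ioi T, (volume.restrict (ball (0 : E) R)) {y : E | t ≤ ‖y‖ ^ (α - (n : ℝ))} := by
        rw [← lintegral_union measurableSet_Ioi (Set.Ioc_disjoint_Ioi le_rfl),
          Set.Ioc_union_Ioi_eq_Ioi hT0.le]
    _ ≤ (∫⁻ _ in Ioc (0:ℝ) T, ENNReal.ofReal (R ^ n) * cn)
        + ∫⁻ t in Ioi T, ENNReal.ofReal (t ^ s) * cn := by
        refine add_le_add (lintegral_mono fun t => ?_) (setLIntegral_mono' measurableSet_Ioi key2)
        calc (volume.restrict (ball (0 : E) R)) {y : E | t ≤ ‖y‖ ^ (α - (n : ℝ))}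
              ≤ (volume.restrict (ball (0 : E) R)) univ := measure_mono (subset_univ _)
            _ = volume (ball (0 : E) R) := by rw [Measure.restrict_apply_univ]
            _ = ENNReal.ofReal (R ^ n) * cn := by
                rw [Measure.addHaar_ball _ _ hR.le, hfr]
    _ ≤ cn * ENNReal.ofReal ((1 + ((n : ℝ) - α) / α) * R ^ α) := by
        rw [setLIntegral_const, lintegral_mul_const _ (by fun_prop), Real.volume_Ioc]
        have h1 : ENNReal.ofReal (R ^ n) * cn * ENNReal.ofReal (T - 0)
            = cn * ENNReal.ofReal (R ^ α) := by
          rw [sub_zero, mul_comm (ENNReal.ofReal (R ^ n)) cn, mul_assoc,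
            ← ENNReal.ofReal_mul (by positivity)]
          congr 2
          rw [← Real.rpow_natCast R n, hT, ← Real.rpow_add hR]
          ring_nf
        have h2 : (∫⁻ t in Ioi T, ENNReal.ofReal (t ^ s))
            = ENNReal.ofReal ((((n:ℝ) - α) / α) * R ^ α) := by
          rw [← ofReal_integral_eq_lintegral_ofReal
            (integrableOn_Ioi_rpow_of_lt hs_lt hT0)
            (by
              filter_upwards [ae_restrict_mem measurableSet_Ioi] with t ht
              exact Real.rpow_nonneg (hT0.trans ht).le _),
            integral_Ioi_rpow_of_lt hs_lt hT0]
          congr 1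
          have hs1 : s + 1 = α / (α - (n : ℝ)) := by
            rw [hs]; field_simp; ring
          have hTs : T ^ (s + 1) = R ^ α := by
            rw [hT, ← Real.rpow_mul hR.le]
            congr 1
            rw [hs1]
            field_simp
          rw [hTs, hs1]
          field_simp
          ring
        have hda : 0 ≤ ((n:ℝ) - α) / α := div_nonneg (by linarith) hα0.le
        rw [h1, h2, mul_comm (ENNReal.ofReal (((n:ℝ) - α) / α * R ^ α)) cn, ← mul_add,
          ← ENNReal.ofReal_add (Real.rpow_nonneg hR.le α)
            (mul_nonneg hda (Real.rpow_nonneg hR.le α))]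
        gcongr
        exact le_of_eq (by ring)

lemma keyL2 (n : ℕ) [NeZero n] (α : ℝ) (hα0 : 0 < α) (hαn : α < n) (hα1 : α < 1) (r : ℝ)
    (hr0 : 0 < r) (hr1 : r ≤ 1) :
    ∫⁻ y in ball (0 : EuclideanSpace ℝ (Fin n)) r, ENNReal.ofReal (‖y - e1 n‖ ^ (α - (n : ℝ))) ≤
      volume (ball (0 : EuclideanSpace ℝ (Fin n)) 1) *
        ENNReal.ofReal ((2 ^ ((n : ℝ) - α) + (1 + ((n : ℝ) - α) / α) * 4 ^ α) * r ^ α) := by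
  set E := EuclideanSpace ℝ (Fin n)
  set cn := volume (ball (0 : E) 1) with hcn
  have hfr : Module.finrank ℝ E = n := finrank_euclideanSpace_fin
  have hda : 0 ≤ ((n:ℝ) - α) / α := div_nonneg (by linarith) hα0.le
  have hc₀ : 0 ≤ 1 + ((n:ℝ) - α) / α := by linarith
  have hrα : 0 ≤ r ^ α := Real.rpow_nonneg hr0.le _
  have he1 : ‖e1 n‖ = 1 := by
    rw [e1, EuclideanSpace.norm_single, norm_one]
  rcases le_or_gt r (1/2) with hr | hr
  · -- small radius : the shifted kernel is bounded by `2 ^ (n - α)` on the ball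
    have hpt : ∀ y ∈ ball (0 : E) r,
        ENNReal.ofReal (‖y - e1 n‖ ^ (α - (n : ℝ))) ≤ ENNReal.ofReal (2 ^ ((n : ℝ) - α)) := by
      intro y hy
      rw [mem_ball, dist_zero_right] at hy
      have h1 : (1:ℝ)/2 ≤ ‖y - e1 n‖ := by
        have := norm_sub_norm_le (e1 n) y
        rw [norm_sub_rev] at this
        rw [he1] at this
        linarith
      apply ENNReal.ofReal_le_ofReal
      calc ‖y - e1 n‖ ^ (α - (n : ℝ)) ≤ ((1:ℝ)/2) ^ (α - (n : ℝ)) :=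
            Real.rpow_le_rpow_of_nonpos (by norm_num) h1 (by
              have : α < (n:ℝ) := hαn; linarith)
        _ = 2 ^ ((n : ℝ) - α) := by
            rw [one_div, ← Real.rpow_neg_one 2, ← Real.rpow_mul (by norm_num)]
            ring_nf
    calc ∫⁻ y in ball (0 : E) r, ENNReal.ofReal (‖y - e1 n‖ ^ (α - (n : ℝ)))
        ≤ ∫⁻ _ in ball (0 : E) r, ENNReal.ofReal (2 ^ ((n : ℝ) - α)) :=
          setLIntegral_mono' measurableSet_ball hpt
      _ = ENNReal.ofReal (2 ^ ((n : ℝ) - α)) * volume (ball (0 : E) r) :=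
          setLIntegral_const _ _
      _ = ENNReal.ofReal (2 ^ ((n : ℝ) - α)) * (ENNReal.ofReal (r ^ n) * cn) := by
          rw [Measure.addHaar_ball _ _ hr0.le, hfr]
      _ ≤ cn * ENNReal.ofReal ((2 ^ ((n : ℝ) - α) + (1 + ((n : ℝ) - α) / α) * 4 ^ α) * r ^ α) := by
          rw [← mul_assoc, ← ENNReal.ofReal_mul (by positivity), mul_comm _ cn]
          refine mul_le_mul_right (ENNReal.ofReal_le_ofReal ?_) cn
          have hrn : r ^ n ≤ r ^ α := by
            rw [← Real.rpow_natCast r n]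
            exact Real.rpow_le_rpow_of_exponent_ge hr0 hr1 (by exact_mod_cast hαn.le)
          have h2 : (0:ℝ) ≤ 2 ^ ((n : ℝ) - α) := Real.rpow_nonneg (by norm_num) _
          have h4 : (0:ℝ) ≤ (1 + ((n:ℝ) - α) / α) * 4 ^ α :=
            mul_nonneg hc₀ (Real.rpow_nonneg (by norm_num) _)
          nlinarith [pow_nonneg hr0.le n]
  · -- large radius : translate and use `keyL` on the ball of radius 2
    have htrans : ∫⁻ y in ball (0 : E) r, ENNReal.ofReal (‖y - e1 n‖ ^ (α - (n : ℝ)))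
        = ∫⁻ z in ball (-(e1 n)) r, ENNReal.ofReal (‖z‖ ^ (α - (n : ℝ))) := by
      rw [← lintegral_indicator measurableSet_ball, ← lintegral_indicator measurableSet_ball]
      have : ∀ y : E,
          (ball (0 : E) r).indicator (fun y => ENNReal.ofReal (‖y - e1 n‖ ^ (α - (n : ℝ)))) y =
          (ball (-(e1 n)) r).indicator (fun z => ENNReal.ofReal (‖z‖ ^ (α - (n : ℝ))))
            (y + -(e1 n)) := by
        intro y
        simp only [Set.indicator, mem_ball, dist_zero_right, dist_eq_norm, sub_neg_eq_add,
          ← sub_eq_add_neg, sub_zero, sub_add_cancel]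
      simp_rw [this]
      exact lintegral_add_right_eq_self
        ((ball (-(e1 n)) r).indicator fun z => ENNReal.ofReal (‖z‖ ^ (α - (n : ℝ)))) (-(e1 n))
    rw [htrans]
    have hsub : ball (-(e1 n)) r ⊆ ball (0 : E) 2 := by
      intro z hz
      rw [mem_ball, dist_eq_norm, sub_neg_eq_add] at hz
      rw [mem_ball, dist_zero_right]
      calc ‖z‖ = ‖z + e1 n + -(e1 n)‖ := by rw [add_neg_cancel_right]
        _ ≤ ‖z + e1 n‖ + ‖-(e1 n)‖ := norm_add_le _ _
        _ < r + 1 := by rw [norm_neg, he1]; linarith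
        _ ≤ 2 := by linarith
    calc ∫⁻ z in ball (-(e1 n)) r, ENNReal.ofReal (‖z‖ ^ (α - (n : ℝ)))
        ≤ ∫⁻ z in ball (0 : E) 2, ENNReal.ofReal (‖z‖ ^ (α - (n : ℝ))) :=
          lintegral_mono_set hsub
      _ ≤ cn * ENNReal.ofReal ((1 + ((n : ℝ) - α) / α) * 2 ^ α) :=
          keyL n α hα0 hαn 2 (by norm_num)
      _ ≤ cn * ENNReal.ofReal ((2 ^ ((n : ℝ) - α) + (1 + ((n : ℝ) - α) / α) * 4 ^ α) * r ^ α) := by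
          refine mul_le_mul_right (ENNReal.ofReal_le_ofReal ?_) cn
          have h24 : (2:ℝ) ^ α = 4 ^ α * ((1:ℝ)/2) ^ α := by
            rw [← Real.mul_rpow (by norm_num) (by norm_num)]
            norm_num
          have hhalf : ((1:ℝ)/2) ^ α ≤ r ^ α :=
            Real.rpow_le_rpow (by norm_num) hr.le hα0.le
          have h2 : (0:ℝ) ≤ 2 ^ ((n : ℝ) - α) := Real.rpow_nonneg (by norm_num) _
          have h4 : (0:ℝ) ≤ (4:ℝ) ^ α := Real.rpow_nonneg (by norm_num) _
          calc (1 + ((n:ℝ) - α) / α) * 2 ^ α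
              = (1 + ((n:ℝ) - α) / α) * 4 ^ α * ((1:ℝ)/2) ^ α := by rw [h24]; ring
            _ ≤ (1 + ((n:ℝ) - α) / α) * 4 ^ α * r ^ α := by
                exact mul_le_mul_of_nonneg_left hhalf (mul_nonneg hc₀ h4)
            _ ≤ (2 ^ ((n : ℝ) - α) + (1 + ((n : ℝ) - α) / α) * 4 ^ α) * r ^ α := by
                nlinarith


theorem stmt7 (n : ℕ) [NeZero n] (hn : 1 < n) (α : ℝ) (hα0 : 0 < α) (hα1 : α < 1)
    (d : ℝ) (hd : d ≠ 0) :
    ∃ C > (0 : ℝ), ∀ x : EuclideanSpace ℝ (Fin n), 0 < ‖x‖ → ‖x‖ ≤ 1 →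
      |d⁻¹ * ‖x‖ ^ (-(n : ℝ)) * ∫ y in ball (0 : EuclideanSpace ℝ (Fin n)) ‖x‖, k1 n α y| ≤
        C * ‖x‖ ^ (α - n) := by
  have hαn : α < (n : ℝ) := by
    have h1 : (1:ℝ) < n := by exact_mod_cast hn
    linarith
  have hda : 0 ≤ ((n:ℝ) - α) / α := div_nonneg (by linarith) hα0.le
  have hc₀ : 0 ≤ 1 + ((n:ℝ) - α) / α := by linarith
  have hc₂ : 0 ≤ 2 ^ ((n:ℝ) - α) + (1 + ((n:ℝ) - α) / α) * 4 ^ α := by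
    have h2 := Real.rpow_nonneg (by norm_num : (0:ℝ) ≤ 2) ((n:ℝ) - α)
    have h4 := Real.rpow_nonneg (by norm_num : (0:ℝ) ≤ 4) α
    nlinarith
  set cn := volume (ball (0 : EuclideanSpace ℝ (Fin n)) 1) with hcn
  have hcn_ne : cn ≠ ⊤ := measure_ball_lt_top.ne
  set CC : ℝ := |(rieszGamma n α)⁻¹| * cn.toReal *
      ((1 + ((n:ℝ) - α) / α) + (2 ^ ((n:ℝ) - α) + (1 + ((n:ℝ) - α) / α) * 4 ^ α)) with hCC
  have hCC0 : 0 ≤ CC := by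
    rw [hCC]
    apply mul_nonneg (mul_nonneg (abs_nonneg _) ENNReal.toReal_nonneg)
    linarith
  have hC0 : (0:ℝ) < |d⁻¹| * CC + 1 := by
    have : 0 ≤ |d⁻¹| * CC := mul_nonneg (abs_nonneg _) hCC0
    linarith
  refine ⟨|d⁻¹| * CC + 1, hC0, ?_⟩
  intro x hx hx1
  set r := ‖x‖ with hrdef
  have hrα : 0 ≤ r ^ α := Real.rpow_nonneg hx.le _
  have hL1 := keyL n α hα0 hαn r hx
  have hL2 := keyL2 n α hα0 hαn hα1 r hx hx1
  -- pointwise bound on the kernel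
  have hpt : ∀ y : EuclideanSpace ℝ (Fin n), ENNReal.ofReal ‖k1 n α y‖ ≤
      ENNReal.ofReal |(rieszGamma n α)⁻¹| *
        (ENNReal.ofReal (‖y‖ ^ (α - (n:ℝ))) + ENNReal.ofReal (‖y - e1 n‖ ^ (α - (n:ℝ)))) := by
    intro y
    have hA : 0 ≤ ‖y‖ ^ (α - (n:ℝ)) := Real.rpow_nonneg (norm_nonneg y) _
    have hB : 0 ≤ ‖y - e1 n‖ ^ (α - (n:ℝ)) := Real.rpow_nonneg (norm_nonneg _) _
    rw [← ENNReal.ofReal_add hA hB, ← ENNReal.ofReal_mul (abs_nonneg _)]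
    apply ENNReal.ofReal_le_ofReal
    rw [k1, Real.norm_eq_abs, abs_mul]
    have habs : |‖y‖ ^ (α - (n:ℝ)) - ‖y - e1 n‖ ^ (α - (n:ℝ))| ≤
        ‖y‖ ^ (α - (n:ℝ)) + ‖y - e1 n‖ ^ (α - (n:ℝ)) := by
      rw [abs_sub_le_iff]
      constructor <;> linarith
    exact mul_le_mul_of_nonneg_left habs (abs_nonneg _)
  have hmeasA : Measurable fun y : EuclideanSpace ℝ (Fin n) =>
      ENNReal.ofReal (‖y‖ ^ (α - (n:ℝ))) :=
    (measurable_norm.pow_const _).ennreal_ofReal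
  have hlin : ∫⁻ y in ball (0 : EuclideanSpace ℝ (Fin n)) r, ENNReal.ofReal ‖k1 n α y‖ ≤
      ENNReal.ofReal |(rieszGamma n α)⁻¹| *
        (cn * ENNReal.ofReal ((1 + ((n:ℝ) - α) / α) * r ^ α) +
         cn * ENNReal.ofReal ((2 ^ ((n:ℝ) - α) + (1 + ((n:ℝ) - α) / α) * 4 ^ α) * r ^ α)) := by
    calc ∫⁻ y in ball (0 : EuclideanSpace ℝ (Fin n)) r, ENNReal.ofReal ‖k1 n α y‖
        ≤ ∫⁻ y in ball (0 : EuclideanSpace ℝ (Fin n)) r,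
            ENNReal.ofReal |(rieszGamma n α)⁻¹| *
              (ENNReal.ofReal (‖y‖ ^ (α - (n:ℝ))) +
               ENNReal.ofReal (‖y - e1 n‖ ^ (α - (n:ℝ)))) :=
          lintegral_mono fun y => hpt y
      _ = ENNReal.ofReal |(rieszGamma n α)⁻¹| *
            ∫⁻ y in ball (0 : EuclideanSpace ℝ (Fin n)) r,
              (ENNReal.ofReal (‖y‖ ^ (α - (n:ℝ))) +
               ENNReal.ofReal (‖y - e1 n‖ ^ (α - (n:ℝ)))) :=
          lintegral_const_mul' _ _ ENNReal.ofReal_ne_top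
      _ = ENNReal.ofReal |(rieszGamma n α)⁻¹| *
            ((∫⁻ y in ball (0 : EuclideanSpace ℝ (Fin n)) r,
              ENNReal.ofReal (‖y‖ ^ (α - (n:ℝ)))) +
             ∫⁻ y in ball (0 : EuclideanSpace ℝ (Fin n)) r,
              ENNReal.ofReal (‖y - e1 n‖ ^ (α - (n:ℝ)))) := by
          rw [lintegral_add_left hmeasA]
      _ ≤ _ := mul_le_mul_right (add_le_add hL1 hL2) _
  -- pass to real numbers
  have hfin : ENNReal.ofReal |(rieszGamma n α)⁻¹| *
      (cn * ENNReal.ofReal ((1 + ((n:ℝ) - α) / α) * r ^ α) +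
       cn * ENNReal.ofReal ((2 ^ ((n:ℝ) - α) + (1 + ((n:ℝ) - α) / α) * 4 ^ α) * r ^ α)) ≠ ⊤ :=
    ENNReal.mul_ne_top ENNReal.ofReal_ne_top (ENNReal.add_ne_top.mpr
      ⟨ENNReal.mul_ne_top hcn_ne ENNReal.ofReal_ne_top,
       ENNReal.mul_ne_top hcn_ne ENNReal.ofReal_ne_top⟩)
  have hInt : |∫ y in ball (0 : EuclideanSpace ℝ (Fin n)) r, k1 n α y| ≤ CC * r ^ α := by
    rw [← Real.norm_eq_abs]
    refine (norm_integral_le_lintegral_norm _).trans ?_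
    refine le_trans (ENNReal.toReal_mono hfin hlin) ?_
    rw [ENNReal.toReal_mul, ENNReal.toReal_add
        (ENNReal.mul_ne_top hcn_ne ENNReal.ofReal_ne_top)
        (ENNReal.mul_ne_top hcn_ne ENNReal.ofReal_ne_top),
      ENNReal.toReal_mul, ENNReal.toReal_mul,
      ENNReal.toReal_ofReal (abs_nonneg _),
      ENNReal.toReal_ofReal (mul_nonneg hc₀ hrα),
      ENNReal.toReal_ofReal (mul_nonneg hc₂ hrα), hCC]
    apply le_of_eq
    ring
  -- final computation
  have hrn : |r ^ (-(n : ℝ))| = r ^ (-(n : ℝ)) :=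
    abs_of_nonneg (Real.rpow_nonneg hx.le _)
  calc |d⁻¹ * r ^ (-(n : ℝ)) * ∫ y in ball (0 : EuclideanSpace ℝ (Fin n)) r, k1 n α y|
      = |d⁻¹| * r ^ (-(n : ℝ)) *
          |∫ y in ball (0 : EuclideanSpace ℝ (Fin n)) r, k1 n α y| := by
        rw [abs_mul, abs_mul, hrn]
    _ ≤ |d⁻¹| * r ^ (-(n : ℝ)) * (CC * r ^ α) :=
        mul_le_mul_of_nonneg_left hInt
          (mul_nonneg (abs_nonneg _) (Real.rpow_nonneg hx.le _))
    _ = (|d⁻¹| * CC) * r ^ (α - (n : ℝ)) := by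
        rw [show α - (n:ℝ) = -(n:ℝ) + α by ring, Real.rpow_add hx]
        ring
    _ ≤ (|d⁻¹| * CC + 1) * r ^ (α - (n : ℝ)) :=
        mul_le_mul_of_nonneg_right (by linarith) (Real.rpow_nonneg hx.le _)
end
end
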